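/- A topological space X is normal if and only if for every continuous map χ : X → V there exists a continuous map λ : X → I₀¹ with π ∘ λ = χ. -/

import Mathlib

open unitInterval

/-- The interval with doubled endpoints: `[0,1]` together with extra points
`0' = Sum.inr false` and `1' = Sum.inr true`, with `0 ⤳ 0'` and `1 ⤳ 1'`. -/
def I01 : Type := unitInterval ⊕ Bool

instance : TopologicalSpace I01 where
  IsOpen U := IsOpen (Sum.inl ⁻¹' U : Set unitInterval) ∧
    (Sum.inr false ∈ U → Sum.inl (0 : unitInterval) ∈ U) ∧
    (Sum.inr true ∈ U → Sum.inl (1 : unitInterval) ∈ U)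
  isOpen_univ := ⟨isOpen_univ, fun _ => trivial, fun _ => trivial⟩
  isOpen_inter U V hU hV := ⟨hU.1.inter hV.1,
    fun h => ⟨hU.2.1 h.1, hV.2.1 h.2⟩, fun h => ⟨hU.2.2 h.1, hV.2.2 h.2⟩⟩
  isOpen_sUnion S hS := by
    refine ⟨?_, ?_, ?_⟩
    · have h : (Sum.inl ⁻¹' ⋃₀ S : Set unitInterval) = ⋃ U ∈ S, (Sum.inl ⁻¹' U : Set unitInterval) :=
        Set.preimage_sUnion
      exact (congrArg IsOpen h).mpr (isOpen_biUnion fun U hU => (hS U hU).1)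
    · rintro ⟨U, hU, hmem⟩
      exact ⟨U, hU, (hS U hU).2.1 hmem⟩
    · rintro ⟨U, hU, hmem⟩
      exact ⟨U, hU, (hS U hU).2.2 hmem⟩

/-- The three-point space with an open point `c` and two closed points `L`, `R`. -/
inductive V : Type
  | L | c | R

instance : TopologicalSpace V where
  IsOpen U := (V.L ∈ U → V.c ∈ U) ∧ (V.R ∈ U → V.c ∈ U)
  isOpen_univ := ⟨fun _ => trivial, fun _ => trivial⟩
  isOpen_inter U W hU hW := ⟨fun h => ⟨hU.1 h.1, hW.1 h.2⟩, fun h => ⟨hU.2 h.1, hW.2 h.2⟩⟩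
  isOpen_sUnion S hS := by
    constructor
    · rintro ⟨U, hU, hmem⟩
      exact ⟨U, hU, (hS U hU).1 hmem⟩
    · rintro ⟨U, hU, hmem⟩
      exact ⟨U, hU, (hS U hU).2 hmem⟩

/-- The map `π : I₀¹ → V` collapsing `[0,1]` to the open point `c`. -/
def pi1 : I01 → V
  | Sum.inl _ => V.c
  | Sum.inr false => V.L
  | Sum.inr true => V.R

/-- The map `ι : I₀¹ → [0,1]` collapsing the doubled endpoints. -/
def iota : I01 → unitInterval
  | Sum.inl x => x
  | Sum.inr false => 0
  | Sum.inr true => 1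


lemma iota_continuous : Continuous iota := by
  rw [continuous_def]
  intro W hW
  refine ⟨hW, fun h => h, fun h => h⟩

lemma pi1_eq_L {z : I01} (h : pi1 z = V.L) : z = Sum.inr false := by
  rcases z with x | b
  · simp [pi1] at h
  · cases b
    · rfl
    · simp [pi1] at h

lemma pi1_eq_R {z : I01} (h : pi1 z = V.R) : z = Sum.inr true := by
  rcases z with x | b
  · simp [pi1] at h
  · cases b
    · simp [pi1] at h
    · rfl

/-- `X` is normal iff every continuous `χ : X → V` lifts through
`π : I₀¹ → V`. -/
theorem normal_iff_lifts (X : Type) [TopologicalSpace X] :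
    NormalSpace X ↔
      ∀ χ : X → V, Continuous χ →
        ∃ lam : X → I01, Continuous lam ∧ pi1 ∘ lam = χ := by
  classical
  constructor
  · intro hX χ hχ
    set A : Set X := χ ⁻¹' {V.L} with hAdef
    set B : Set X := χ ⁻¹' {V.R} with hBdef
    have hLc : IsClosed ({V.L} : Set V) := by
      rw [← isOpen_compl_iff]
      constructor
      · intro h; simp at h
      · intro _; simp
    have hRc : IsClosed ({V.R} : Set V) := by
      rw [← isOpen_compl_iff]
      constructor
      · intro _; simp
      · intro h; simp at h
    have hA : IsClosed A := hLc.preimage hχ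
    have hB : IsClosed B := hRc.preimage hχ
    have hAB : Disjoint A B := by
      rw [Set.disjoint_left]
      intro x hxA hxB
      simp only [hAdef, hBdef, Set.mem_preimage, Set.mem_singleton_iff] at hxA hxB
      rw [hxA] at hxB; exact V.noConfusion hxB
    obtain ⟨f, hf0, hf1, hf01⟩ := exists_continuous_zero_one_of_isClosed hA hB hAB
    set g : X → unitInterval := fun x => ⟨f x, hf01 x⟩ with hgdef
    have hg : Continuous g := f.continuous.subtype_mk _
    set lam : X → I01 := fun x =>
      if x ∈ A then Sum.inr false else if x ∈ B then Sum.inr true else Sum.inl (g x)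
      with hlamdef
    have hgA : ∀ x ∈ A, g x = 0 := fun x hx => Subtype.ext (hf0 hx)
    have hgB : ∀ x ∈ B, g x = 1 := fun x hx => Subtype.ext (hf1 hx)
    refine ⟨lam, ?_, ?_⟩
    · rw [continuous_def]
      intro U hU
      obtain ⟨hW, h0, h1⟩ := hU
      set W : Set unitInterval := Sum.inl ⁻¹' U with hWdef
      have key : lam ⁻¹' U =
          (g ⁻¹' W) ∩ (if Sum.inr false ∈ U then Set.univ else Aᶜ) ∩
            (if Sum.inr true ∈ U then Set.univ else Bᶜ) := by
        ext x
        by_cases hxA : x ∈ A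
        · have hxB : x ∉ B := fun hxB => (Set.disjoint_left.mp hAB hxA) hxB
          have hlx : lam x = Sum.inr false := by simp [hlamdef, hxA]; rfl
          simp only [Set.mem_preimage, Set.mem_inter_iff, hlx]
          by_cases hF : Sum.inr false ∈ U
          · refine iff_of_true hF ⟨⟨?_, ?_⟩, ?_⟩
            · show g x ∈ W
              rw [hgA x hxA]; exact h0 hF
            · rw [if_pos hF]; exact Set.mem_univ x
            · split
              · exact Set.mem_univ x
              · exact hxB
          · refine iff_of_false hF ?_
            rintro ⟨⟨-, hc⟩, -⟩
            rw [if_neg hF] at hc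
            exact hc hxA
        · by_cases hxB : x ∈ B
          · have hlx : lam x = Sum.inr true := by simp [hlamdef, hxA, hxB]; rfl
            simp only [Set.mem_preimage, Set.mem_inter_iff, hlx]
            by_cases hT : Sum.inr true ∈ U
            · refine iff_of_true hT ⟨⟨?_, ?_⟩, ?_⟩
              · show g x ∈ W
                rw [hgB x hxB]; exact h1 hT
              · split
                · exact Set.mem_univ x
                · exact hxA
              · rw [if_pos hT]; exact Set.mem_univ x
            · refine iff_of_false hT ?_
              rintro ⟨-, hc⟩
              rw [if_neg hT] at hc
              exact hc hxB
          · have hlx : lam x = Sum.inl (g x) := by simp [hlamdef, hxA, hxB]; rfl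
            simp only [Set.mem_preimage, Set.mem_inter_iff, hlx]
            constructor
            · intro h
              refine ⟨⟨h, ?_⟩, ?_⟩
              · split
                · exact Set.mem_univ x
                · exact hxA
              · split
                · exact Set.mem_univ x
                · exact hxB
            · rintro ⟨⟨h, -⟩, -⟩; exact h
      rw [key]
      refine IsOpen.inter (IsOpen.inter (hg.isOpen_preimage W hW) ?_) ?_
      · split
        · exact isOpen_univ
        · exact hA.isOpen_compl
      · split
        · exact isOpen_univ
        · exact hB.isOpen_compl
    · funext x
      by_cases hxA : x ∈ A
      · have : χ x = V.L := hxA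
        simp [hlamdef, hxA, pi1, this]
      · by_cases hxB : x ∈ B
        · have : χ x = V.R := hxB
          simp [hlamdef, hxA, hxB, pi1, this]
        · have hL : χ x ≠ V.L := hxA
          have hR : χ x ≠ V.R := hxB
          have : χ x = V.c := by
            cases h : χ x
            · exact absurd h hL
            · rfl
            · exact absurd h hR
          simp [hlamdef, hxA, hxB, pi1, this]
  · intro hlift
    refine ⟨fun s t hs ht hst => ?_⟩
    set χ : X → V := fun x => if x ∈ s then V.L else if x ∈ t then V.R else V.c with hχdef
    have hχs : ∀ x ∈ s, χ x = V.L := by intro x hx; simp [hχdef, hx]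
    have hχt : ∀ x ∈ t, χ x = V.R := by
      intro x hx
      have hxs : x ∉ s := fun h => (Set.disjoint_left.mp hst h) hx
      simp [hχdef, hx, hxs]
    have hχcont : Continuous χ := by
      rw [continuous_def]
      intro U hU
      obtain ⟨hL, hR⟩ := hU
      by_cases hc : V.c ∈ U
      · have key : χ ⁻¹' U =
            (if V.L ∈ U then Set.univ else sᶜ) ∩ (if V.R ∈ U then Set.univ else tᶜ) := by
          ext x
          by_cases hxs : x ∈ s
          · have hx : χ x = V.L := hχs x hxs
            have hxt : x ∉ t := fun h => (Set.disjoint_left.mp hst hxs) h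
            simp only [Set.mem_preimage, Set.mem_inter_iff, hx]
            constructor
            · intro h
              constructor
              · rw [if_pos h]; exact Set.mem_univ x
              · split
                · exact Set.mem_univ x
                · exact hxt
            · rintro ⟨h1, -⟩
              by_cases hLU : V.L ∈ U
              · exact hLU
              · rw [if_neg hLU] at h1; exact absurd hxs h1
          · by_cases hxt : x ∈ t
            · have hx : χ x = V.R := hχt x hxt
              simp only [Set.mem_preimage, Set.mem_inter_iff, hx]
              constructor
              · intro h
                constructor
                · split
                  · exact Set.mem_univ x
                  · exact hxs
                · rw [if_pos h]; exact Set.mem_univ x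
              · rintro ⟨-, h2⟩
                by_cases hRU : V.R ∈ U
                · exact hRU
                · rw [if_neg hRU] at h2; exact absurd hxt h2
            · have hx : χ x = V.c := by simp [hχdef, hxs, hxt]
              simp only [Set.mem_preimage, Set.mem_inter_iff, hx]
              constructor
              · intro _
                constructor
                · split
                  · exact Set.mem_univ x
                  · exact hxs
                · split
                  · exact Set.mem_univ x
                  · exact hxt
              · intro _; exact hc
        rw [key]
        refine IsOpen.inter ?_ ?_
        · split
          · exact isOpen_univ
          · exact hs.isOpen_compl
        · split
          · exact isOpen_univ
          · exact ht.isOpen_compl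
      · have hLU : V.L ∉ U := fun h => hc (hL h)
        have hRU : V.R ∉ U := fun h => hc (hR h)
        have key : χ ⁻¹' U = ∅ := by
          ext x
          simp only [Set.mem_preimage, Set.mem_empty_iff_false, iff_false]
          intro h
          cases hx : χ x
          · rw [hx] at h; exact hLU h
          · rw [hx] at h; exact hc h
          · rw [hx] at h; exact hRU h
        rw [key]; exact isOpen_empty
    obtain ⟨lam, hlam, hcomm⟩ := hlift χ hχcont
    set f : X → ℝ := fun x => ((iota (lam x) : unitInterval) : ℝ) with hfdef
    have hf : Continuous f :=
      continuous_subtype_val.comp (iota_continuous.comp hlam)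
    have hfs : ∀ x ∈ s, f x = 0 := by
      intro x hx
      have h1 : pi1 (lam x) = V.L := by
        have := congrFun hcomm x
        simp only [Function.comp_apply] at this
        rw [this]; exact hχs x hx
      have h2 : lam x = Sum.inr false := pi1_eq_L h1
      simp [hfdef, h2, iota]
    have hft : ∀ x ∈ t, f x = 1 := by
      intro x hx
      have h1 : pi1 (lam x) = V.R := by
        have := congrFun hcomm x
        simp only [Function.comp_apply] at this
        rw [this]; exact hχt x hx
      have h2 : lam x = Sum.inr true := pi1_eq_R h1
      simp [hfdef, h2, iota]
    refine ⟨f ⁻¹' Set.Iio (1/2 : ℝ), f ⁻¹' Set.Ioi (1/2 : ℝ),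
      isOpen_Iio.preimage hf, isOpen_Ioi.preimage hf, ?_, ?_, ?_⟩
    · intro x hx
      simp only [Set.mem_preimage, Set.mem_Iio, hfs x hx]
      norm_num
    · intro x hx
      simp only [Set.mem_preimage, Set.mem_Ioi, hft x hx]
      norm_num
    · rw [Set.disjoint_left]
      intro x h1 h2
      simp only [Set.mem_preimage, Set.mem_Iio, Set.mem_Ioi] at h1 h2
      linarith
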